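/- If D is atomic (for every flaw f_i and every state τ there is at most one state σ ∈ f_i with τ ∈ A(i,σ)) and (D,ρ) regenerate μ at every flaw, then for every τ ∈ Ω and every flaw f_i there is exactly one σ ∈ f_i with ρ_i(σ,τ) > 0, the union of A(i,σ) over σ ∈ f_i equals Ω, and for that unique σ we have ρ_i(σ,τ) = μ(τ)·μ(f_i)/μ(σ). -/
import Mathlib


/-- If the action digraph is atomic and `(D,ρ)` regenerate `μ` at every flaw, then for
every state `τ` and every flaw `f i` there is exactly one `σ ∈ f i` with `ρ i σ τ > 0`,
the union of the action sets `A i σ` over `σ ∈ f i` is all of `Ω`, and for any such `σ`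
we have `ρ i σ τ = μ τ * μ(f i) / μ σ`. -/
theorem stmt_0 {Ω ι : Type*} [Fintype Ω] [DecidableEq Ω]
    (μ : Ω → ℝ) (hμpos : ∀ σ, 0 < μ σ) (hμ1 : ∑ σ, μ σ = 1)
    (f : ι → Finset Ω) (hf : ∀ i, (f i).Nonempty)
    (A : ι → Ω → Finset Ω) (hA : ∀ i, ∀ σ ∈ f i, (A i σ).Nonempty)
    (ρ : ι → Ω → Ω → ℝ)
    (hρ0 : ∀ i σ τ, 0 ≤ ρ i σ τ)
    (hρsupp : ∀ i, ∀ σ ∈ f i, ∀ τ, τ ∉ A i σ → ρ i σ τ = 0)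
    (hρsum : ∀ i, ∀ σ ∈ f i, ∑ τ, ρ i σ τ = 1)
    (hatomic : ∀ i (τ : Ω), ∀ σ ∈ f i, ∀ σ' ∈ f i, τ ∈ A i σ → τ ∈ A i σ' → σ = σ')
    (hregen : ∀ i (τ : Ω), (∑ σ ∈ f i, μ σ * ρ i σ τ) / (∑ σ ∈ f i, μ σ) = μ τ) :
    ∀ i (τ : Ω),
      (∃! σ, σ ∈ f i ∧ 0 < ρ i σ τ) ∧
      (∃ σ ∈ f i, τ ∈ A i σ) ∧
      (∀ σ ∈ f i, 0 < ρ i σ τ → ρ i σ τ = μ τ * (∑ σ' ∈ f i, μ σ') / μ σ) := by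
  intro i τ
  have hS : 0 < ∑ σ ∈ f i, μ σ := Finset.sum_pos (fun σ _ => hμpos σ) (hf i)
  have hsum : ∑ σ ∈ f i, μ σ * ρ i σ τ = μ τ * ∑ σ ∈ f i, μ σ := by
    have h := hregen i τ
    rw [div_eq_iff hS.ne'] at h
    linarith
  have hex : ∃ σ ∈ f i, 0 < ρ i σ τ := by
    by_contra h
    push_neg at h
    have hz : ∑ σ ∈ f i, μ σ * ρ i σ τ = 0 := Finset.sum_eq_zero fun σ hσ => by
      have := le_antisymm (h σ hσ) (hρ0 i σ τ); simp [this]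
    have := hμpos τ
    nlinarith
  obtain ⟨σ0, hσ0f, hσ0pos⟩ := hex
  have hmem : ∀ σ ∈ f i, 0 < ρ i σ τ → τ ∈ A i σ := fun σ hσ hpos => by
    by_contra h; exact absurd (hρsupp i σ hσ τ h) (ne_of_gt hpos)
  have huniq : ∀ σ ∈ f i, 0 < ρ i σ τ → σ = σ0 := fun σ hσ hpos =>
    hatomic i τ σ hσ σ0 hσ0f (hmem σ hσ hpos) (hmem σ0 hσ0f hσ0pos)
  have hcollapse : ∀ σ ∈ f i, 0 < ρ i σ τ →
      ∑ σ' ∈ f i, μ σ' * ρ i σ' τ = μ σ * ρ i σ τ := fun σ hσ hpos => by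
    refine Finset.sum_eq_single_of_mem σ hσ fun σ' hσ' hne => ?_
    rcases (hρ0 i σ' τ).lt_or_eq with hpos' | heq
    · exact absurd ((huniq σ' hσ' hpos').trans (huniq σ hσ hpos).symm) hne
    · simp [← heq]
  refine ⟨⟨σ0, ⟨hσ0f, hσ0pos⟩, fun σ hσp => huniq σ hσp.1 hσp.2⟩,
    ⟨σ0, hσ0f, hmem σ0 hσ0f hσ0pos⟩, fun σ hσ hpos => ?_⟩
  have h1 := (hcollapse σ hσ hpos).symm.trans hsum
  have hμσ := hμpos σ
  field_simp
  nlinarith [h1]
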